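/- Let f : ℝ → ℝ be continuous and nonnegative and let y > 0 satisfy f(y/2) + 4·f(y) + 4·f(2y) > 0. Then, as ε → 0⁺, the ratio (−∫_{y/2−ε/2}^{y/2+ε/2} x·f(x) dx + (1/2)∫_{y−ε}^{y+ε} x·f(x) dx + (1/2)∫_{2y−2ε}^{2y+2ε} x·f(x) dx) / (∫_{y/2−ε/2}^{y/2+ε/2} f(x) dx + 2∫_{y−ε}^{y+ε} f(x) dx + ∫_{2y−2ε}^{2y+2ε} f(x) dx) tends to (−(y/2)·f(y/2) + y·f(y) + 4y·f(2y)) / (f(y/2) + 4·f(y) + 4·f(2y)). -/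

import Mathlib

open MeasureTheory Filter

lemma window_tendsto (g : ℝ → ℝ) (hg : Continuous g) (a c : ℝ) :
    Tendsto (fun ε : ℝ => (∫ x in (a - c * ε)..(a + c * ε), g x) / ε)
      (nhdsWithin 0 (Set.Ioi 0)) (nhds (2 * c * g a)) := by
  set F : ℝ → ℝ := fun t => ∫ x in (0:ℝ)..t, g x with hFdef
  have hF : ∀ t, HasDerivAt F (g t) t := fun t =>
(hg.integral_hasStrictDerivAt 0 t).hasDerivAt
  have hGeq : ∀ ε : ℝ, (∫ x in (a - c * ε)..(a + c * ε), g x)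
      = F (a + c * ε) - F (a - c * ε) := by
    intro ε
    have i1 : IntervalIntegrable g volume 0 (a - c * ε) := hg.intervalIntegrable _ _
    have i2 : IntervalIntegrable g volume (a - c * ε) (a + c * ε) := hg.intervalIntegrable _ _
    have := intervalIntegral.integral_add_adjacent_intervals i1 i2
    simp only [hFdef]
    linarith [this]
  have h1 : HasDerivAt (fun ε : ℝ => a + c * ε) c 0 := by
    simpa using ((hasDerivAt_id (0:ℝ)).const_mul c).const_add a
  have h2 : HasDerivAt (fun ε : ℝ => a - c * ε) (-c) 0 := by
    simpa using ((hasDerivAt_id (0:ℝ)).const_mul c).const_sub a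
  have hG : HasDerivAt (fun ε : ℝ => F (a + c * ε) - F (a - c * ε)) (2 * c * g a) 0 := by
    have hGa := ((hF (a + c * 0)).comp 0 h1).sub ((hF (a - c * 0)).comp 0 h2)
    simp only [mul_zero, add_zero, sub_zero] at hGa
    rw [show 2 * c * g a = g a * c - g a * -c from by ring]
    exact hGa
  have hslope := hasDerivAt_iff_tendsto_slope.mp hG
  have hmono : nhdsWithin (0:ℝ) (Set.Ioi 0) ≤ nhdsWithin 0 {(0:ℝ)}ᶜ :=
    nhdsWithin_mono 0 (fun x hx => ne_of_gt hx)
  have := hslope.mono_left hmono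
  refine this.congr' ?_
  filter_upwards [self_mem_nhdsWithin] with ε (hε : (0:ℝ) < ε)
  rw [slope_def_field, hGeq]
  simp

/-- Halving-or-doubling strategy: the expected benefit of switching, given the
observed content lies in `(y - ε, y + ε]`, tends to
`(-(y/2) f(y/2) + y f(y) + 4y f(2y)) / (f(y/2) + 4 f(y) + 4 f(2y))` as `ε → 0⁺`. -/
theorem halving_or_doubling_expected_benefit (f : ℝ → ℝ) (hf : Continuous f)
    (hf0 : ∀ x, 0 ≤ f x) (y : ℝ) (hy : 0 < y)
    (hpos : 0 < f (y / 2) + 4 * f y + 4 * f (2 * y)) :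
    Tendsto (fun ε : ℝ =>
        (-(∫ x in (y / 2 - ε / 2)..(y / 2 + ε / 2), x * f x) +
            (1 / 2) * (∫ x in (y - ε)..(y + ε), x * f x) +
            (1 / 2) * ∫ x in (2 * y - 2 * ε)..(2 * y + 2 * ε), x * f x) /
          ((∫ x in (y / 2 - ε / 2)..(y / 2 + ε / 2), f x) +
            2 * (∫ x in (y - ε)..(y + ε), f x) +
            ∫ x in (2 * y - 2 * ε)..(2 * y + 2 * ε), f x))
      (nhdsWithin 0 (Set.Ioi 0))
      (nhds ((-(y / 2) * f (y / 2) + y * f y + 4 * y * f (2 * y)) /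
        (f (y / 2) + 4 * f y + 4 * f (2 * y)))) := by
  have hxf : Continuous (fun x : ℝ => x * f x) := continuous_id.mul hf
  have T1 := window_tendsto (fun x => x * f x) hxf (y / 2) (1 / 2)
  have T2 := window_tendsto (fun x => x * f x) hxf y 1
  have T3 := window_tendsto (fun x => x * f x) hxf (2 * y) 2
  have B1 := window_tendsto f hf (y / 2) (1 / 2)
  have B2 := window_tendsto f hf y 1
  have B3 := window_tendsto f hf (2 * y) 2
  have hN := (T1.neg.add (T2.const_mul (1 / 2))).add (T3.const_mul (1 / 2))
  have hD := (B1.add (B2.const_mul 2)).add B3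
  have hDne : (2 * (1 / 2) * f (y / 2) + 2 * (2 * 1 * f y)) + 2 * 2 * f (2 * y) ≠ 0 := by
    intro h; apply ne_of_gt hpos; linarith
  have key := hN.div hD hDne
  have hlim : ((-(2 * (1 / 2) * ((y / 2) * f (y / 2))) + 1 / 2 * (2 * 1 * (y * f y))) +
        1 / 2 * (2 * 2 * ((2 * y) * f (2 * y)))) /
        ((2 * (1 / 2) * f (y / 2) + 2 * (2 * 1 * f y)) + 2 * 2 * f (2 * y)) =
      (-(y / 2) * f (y / 2) + y * f y + 4 * y * f (2 * y)) /
        (f (y / 2) + 4 * f y + 4 * f (2 * y)) := by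
    congr 1 <;> ring
  rw [hlim] at key
  refine Tendsto.congr' ?_ key
  filter_upwards [self_mem_nhdsWithin] with ε (hε : (0:ℝ) < ε)
  have hε' : ε ≠ 0 := ne_of_gt hε
  rw [show y / 2 - ε / 2 = y / 2 - 1 / 2 * ε from by ring,
    show y / 2 + ε / 2 = y / 2 + 1 / 2 * ε from by ring,
    show y - ε = y - 1 * ε from by ring, show y + ε = y + 1 * ε from by ring]
  simp only [Pi.div_apply]
  set I1 := ∫ x in (y / 2 - 1 / 2 * ε)..(y / 2 + 1 / 2 * ε), x * f x with hI1
  set I2 := ∫ x in (y - 1 * ε)..(y + 1 * ε), x * f x with hI2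
  set I3 := ∫ x in (2 * y - 2 * ε)..(2 * y + 2 * ε), x * f x with hI3
  set J1 := ∫ x in (y / 2 - 1 / 2 * ε)..(y / 2 + 1 / 2 * ε), f x with hJ1
  set J2 := ∫ x in (y - 1 * ε)..(y + 1 * ε), f x with hJ2
  set J3 := ∫ x in (2 * y - 2 * ε)..(2 * y + 2 * ε), f x with hJ3
  rw [show -(I1 / ε) + 1 / 2 * (I2 / ε) + 1 / 2 * (I3 / ε) = (-I1 + 1 / 2 * I2 + 1 / 2 * I3) / ε
      from by ring,
    show J1 / ε + 2 * (J2 / ε) + J3 / ε = (J1 + 2 * J2 + J3) / ε from by ring,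
    div_div_div_cancel_right₀ hε']
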